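/- Let t ≥ 1 and ζ ≥ 2 be integers with t dividing ζ, let G be a graph containing no K_{t,t} subgraph, let C be a set of ζ vertices of G, and let w be a vertex of G (with C the set of children of w in some tree, though only |C| = ζ matters). Then there are at most t−1 vertices u of G outside C ∪ {w} such that u is adjacent to more than ζ(t−1)/t vertices of C. -/
import Mathlib


/-- `G` contains the complete bipartite graph `K_{s,t}` as a (not necessarily
induced) subgraph: there are disjoint vertex sets `A`, `B` of sizes `s`, `t`
with all edges between them present. -/
def ContainsKst {V : Type*} (G : SimpleGraph V) (s t : ℕ) : Prop :=
  ∃ A B : Finset V, A.card = s ∧ B.card = t ∧ Disjoint A B ∧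
    ∀ a ∈ A, ∀ b ∈ B, G.Adj a b

/-- Let `t ≥ 1`, `ζ ≥ 2` with `t ∣ ζ`, let `G` contain no `K_{t,t}` subgraph,
let `C` be a set of `ζ` vertices and `w` a vertex outside `C`. Then at most
`t − 1` vertices `u ∉ C ∪ {w}` are adjacent to more than `ζ(t−1)/t` vertices
of `C` (the inequality `|N(u) ∩ C| > ζ(t−1)/t` is written `t·|N(u)∩C| > (t−1)·ζ`). -/
theorem stmt_6 {V : Type*} [Fintype V] (G : SimpleGraph V) (t ζ : ℕ)
    (ht : 1 ≤ t) (hζ : 2 ≤ ζ) (hdvd : t ∣ ζ)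
    (hK : ¬ ContainsKst G t t)
    (C : Finset V) (hC : C.card = ζ) (w : V) (hw : w ∉ C) :
    {u : V | u ∉ C ∧ u ≠ w ∧
      (t - 1) * ζ < t * {c ∈ (C : Set V) | G.Adj u c}.ncard}.ncard ≤ t - 1 := by
  classical
  -- rewrite inner ncard as finset card
  have hinner : ∀ u : V, {c ∈ (C : Set V) | G.Adj u c}.ncard
      = (C.filter (fun c => G.Adj u c)).card := by
    intro u
    rw [show {c ∈ (C : Set V) | G.Adj u c} = ↑(C.filter (fun c => G.Adj u c)) by
      ext c; simp]
    exact Set.ncard_coe_finset _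
  set U : Finset V := Finset.univ.filter (fun u => u ∉ C ∧ u ≠ w ∧
      (t - 1) * ζ < t * (C.filter (fun c => G.Adj u c)).card) with hU
  have houter : {u : V | u ∉ C ∧ u ≠ w ∧
      (t - 1) * ζ < t * {c ∈ (C : Set V) | G.Adj u c}.ncard} = ↑U := by
    ext u; rw [Set.mem_setOf_eq, hinner u]; simp [hU]
  rw [houter, Set.ncard_coe_finset]
  by_contra hcon
  push_neg at hcon
  have htU : t ≤ U.card := by omega
  obtain ⟨A, hAU, hAcard⟩ := Finset.exists_subset_card_eq htU
  -- properties of elements of A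
  have hAprop : ∀ a ∈ A, a ∉ C ∧ (t - 1) * ζ < t * (C.filter (fun c => G.Adj a c)).card := by
    intro a ha
    have := hAU ha
    simp only [hU, Finset.mem_filter] at this
    exact ⟨this.2.1, this.2.2.2⟩
  have htζ : t ≤ ζ := Nat.le_of_dvd (by omega) hdvd
  -- each a misses at most ζ/t - 1 vertices of C
  have hmiss : ∀ a ∈ A, (C.filter (fun c => ¬ G.Adj a c)).card ≤ ζ / t - 1 := by
    intro a ha
    have h1 := (hAprop a ha).2
    have h2 : (C.filter (fun c => G.Adj a c)).card
        + (C.filter (fun c => ¬ G.Adj a c)).card = ζ := by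
      rw [Finset.card_filter_add_card_filter_not]; exact hC
    have hle : (C.filter (fun c => G.Adj a c)).card ≤ ζ := by omega
    have h3 : t * (C.filter (fun c => ¬ G.Adj a c)).card < ζ := by
      have e : t - 1 + 1 = t := Nat.succ_pred_eq_of_pos ht
      nlinarith [h1, h2, e]
    have h4 : t * (ζ / t) = ζ := Nat.mul_div_cancel' hdvd
    have h5 : (C.filter (fun c => ¬ G.Adj a c)).card < ζ / t := by
      by_contra hcc
      push_neg at hcc
      have := Nat.mul_le_mul_left t hcc
      omega
    omega
  set B : Finset V := C.filter (fun c => ∀ a ∈ A, G.Adj a c) with hB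
  have hCB : C \ B ⊆ A.biUnion (fun a => C.filter (fun c => ¬ G.Adj a c)) := by
    intro c hc
    simp only [hB, Finset.mem_sdiff, Finset.mem_filter, not_and, not_forall] at hc
    obtain ⟨hcC, hnc⟩ := hc
    obtain ⟨a, ha, hna⟩ := hnc hcC
    simp only [Finset.mem_biUnion, Finset.mem_filter]
    exact ⟨a, ha, hcC, hna⟩
  have hCBcard : (C \ B).card ≤ ζ - t := by
    calc (C \ B).card ≤ (A.biUnion (fun a => C.filter (fun c => ¬ G.Adj a c))).card :=
          Finset.card_le_card hCB
      _ ≤ ∑ a ∈ A, (C.filter (fun c => ¬ G.Adj a c)).card := Finset.card_biUnion_le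
      _ ≤ ∑ _a ∈ A, (ζ / t - 1) := Finset.sum_le_sum hmiss
      _ = t * (ζ / t - 1) := by rw [Finset.sum_const, hAcard, smul_eq_mul]
      _ ≤ ζ - t := by
          have h4 : t * (ζ / t) = ζ := Nat.mul_div_cancel' hdvd
          have h5 : 1 ≤ ζ / t := Nat.one_le_div_iff (by omega) |>.2 htζ
          have e2 : t * (ζ / t - 1) + t * 1 = t * (ζ / t) := by
            rw [← Nat.mul_add]; congr 1; omega
          omega
  have hBsub : B ⊆ C := Finset.filter_subset _ _
  have hBcard : t ≤ B.card := by
    have := Finset.card_sdiff_add_card_eq_card hBsub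
    omega
  obtain ⟨B', hB'B, hB'card⟩ := Finset.exists_subset_card_eq hBcard
  apply hK
  refine ⟨A, B', hAcard, hB'card, ?_, ?_⟩
  · rw [Finset.disjoint_left]
    intro a ha hab
    exact (hAprop a ha).1 (hBsub (hB'B hab))
  · intro a ha b hb
    have := hB'B hb
    simp only [hB, Finset.mem_filter] at this
    exact this.2 a ha
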